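/- Let F: ℝ^d → ℝ be differentiable with Lip(∇F) = sup_{x≠y} |∇F(x) - ∇F(y)|/|x - y| ≤ M. Then for any a, b ∈ ℝ^d, |F(a) - F(b) - ½(∇F(a) + ∇F(b))·(a - b)| ≤ (M/4)|a - b|². -/

import Mathlib

open RealInnerProductSpace
open intervalIntegral

/-- Taylor-type estimate for functions with `M`-Lipschitz gradient. -/
theorem c11_taylor_midpoint_estimate {d : ℕ}
    (F : EuclideanSpace ℝ (Fin d) → ℝ) (M : ℝ)
    (hdiff : Differentiable ℝ F)
    (hlip : ∀ x y, ‖gradient F x - gradient F y‖ ≤ M * ‖x - y‖) :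
    ∀ a b, |F a - F b - (1 / 2) * ⟪gradient F a + gradient F b, a - b⟫|
      ≤ (M / 4) * ‖a - b‖ ^ 2 := by
  intro a b
  by_cases hab : a = b
  · subst hab; simp
  set v := a - b with hvdef
  have hv : v ≠ 0 := sub_ne_zero.mpr hab
  have hvpos : 0 < ‖v‖ := norm_pos_iff.mpr hv
  have hM : 0 ≤ M := by
    nlinarith [hlip a b, norm_nonneg (gradient F a - gradient F b)]
  set γ : ℝ → EuclideanSpace ℝ (Fin d) := fun t => b + t • v with hγdef
  set g : ℝ → ℝ := fun t => ⟪gradient F (γ t), v⟫ with hgdef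
  set c : ℝ := M * ‖v‖ ^ 2 with hcdef
  have hγ1 : γ 1 = a := by simp [hγdef, hvdef]
  have hγ0 : γ 0 = b := by simp [hγdef]
  have hγderiv : ∀ t : ℝ, HasDerivAt γ v t := by
    intro t
    have h1 : HasDerivAt (fun s : ℝ => s • v) ((1:ℝ) • v) t :=
      (hasDerivAt_id t).smul_const v
    have h2 := h1.const_add b
    simp only [one_smul] at h2
    exact h2
  have hg : ∀ t : ℝ, HasDerivAt (fun s => F (γ s)) (g t) t := by
    intro t
    have hF : HasFDerivAt F ((InnerProductSpace.toDual ℝ _) (gradient F (γ t))) (γ t) :=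
      (hdiff (γ t)).hasGradientAt.hasFDerivAt
    have := hF.comp_hasDerivAt t (hγderiv t)
    have h3 : ((InnerProductSpace.toDual ℝ _) (gradient F (γ t))) v = g t := by simp [hgdef]
    rw [h3] at this
    exact this
  have key : ∀ t s : ℝ, |g t - g s| ≤ c * |t - s| := by
    intro t s
    have h1 : g t - g s = ⟪gradient F (γ t) - gradient F (γ s), v⟫ := by
      simp [hgdef, inner_sub_left]
    rw [h1]
    calc |⟪gradient F (γ t) - gradient F (γ s), v⟫|
        ≤ ‖gradient F (γ t) - gradient F (γ s)‖ * ‖v‖ := abs_real_inner_le_norm _ _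
      _ ≤ (M * ‖γ t - γ s‖) * ‖v‖ := by
          gcongr; exact hlip _ _
      _ = c * |t - s| := by
          have : γ t - γ s = (t - s) • v := by
            simp [hγdef, sub_smul]
          rw [this, norm_smul]
          simp only [hcdef, Real.norm_eq_abs]
          ring
  have hgcont : Continuous g := by
    have : LipschitzWith c.toNNReal g := by
      apply LipschitzWith.of_dist_le_mul
      intro t s
      have := key t s
      simp only [Real.dist_eq]
      calc |g t - g s| ≤ c * |t - s| := key t s
        _ ≤ c.toNNReal * |t - s| := by
            gcongr
            exact Real.le_coe_toNNReal c
    exact this.continuous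
  have hFT : ∫ t in (0:ℝ)..1, g t = F a - F b := by
    rw [integral_eq_sub_of_hasDerivAt (fun t _ => hg t) (hgcont.intervalIntegrable 0 1)]
    rw [hγ1, hγ0]
  have hsplit : ∫ t in (0:ℝ)..1, g t =
      (∫ t in (0:ℝ)..(1/2), g t) + ∫ t in (1/2:ℝ)..1, g t :=
    (integral_add_adjacent_intervals (hgcont.intervalIntegrable _ _)
      (hgcont.intervalIntegrable _ _)).symm
  have h1 : |∫ t in (0:ℝ)..(1/2), (g t - g 0)| ≤ c / 8 := by
    have hint : IntervalIntegrable (fun t => g t - g 0) MeasureTheory.volume 0 (1/2) :=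
      (hgcont.sub continuous_const).intervalIntegrable _ _
    calc |∫ t in (0:ℝ)..(1/2), (g t - g 0)|
        ≤ ∫ t in (0:ℝ)..(1/2), |g t - g 0| :=
          intervalIntegral.abs_integral_le_integral_abs (by norm_num)
      _ ≤ ∫ t in (0:ℝ)..(1/2), c * t := by
          apply intervalIntegral.integral_mono_on (by norm_num)
            (hint.abs) ((continuous_const.mul continuous_id).intervalIntegrable _ _)
          intro t ht
          have := key t 0
          simpa [abs_of_nonneg ht.1] using this
      _ = c / 8 := by
          rw [intervalIntegral.integral_const_mul, integral_id]
          ring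
  have h2 : |∫ t in (1/2:ℝ)..1, (g t - g 1)| ≤ c / 8 := by
    have hint : IntervalIntegrable (fun t => g t - g 1) MeasureTheory.volume (1/2) 1 :=
      (hgcont.sub continuous_const).intervalIntegrable _ _
    calc |∫ t in (1/2:ℝ)..1, (g t - g 1)|
        ≤ ∫ t in (1/2:ℝ)..1, |g t - g 1| :=
          intervalIntegral.abs_integral_le_integral_abs (by norm_num)
      _ ≤ ∫ t in (1/2:ℝ)..1, c * (1 - t) := by
          apply intervalIntegral.integral_mono_on (by norm_num)
            (hint.abs) ((continuous_const.mul (continuous_const.sub continuous_id)).intervalIntegrable _ _)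
          intro t ht
          have := key t 1
          have habs : |t - 1| = 1 - t := by
            rw [abs_sub_comm]; exact abs_of_nonneg (by linarith [ht.2])
          rw [habs] at this
          exact this
      _ = c / 8 := by
          rw [intervalIntegral.integral_const_mul]
          have : (∫ t in (1/2:ℝ)..1, (1 - t)) = 1/8 := by
            rw [intervalIntegral.integral_sub intervalIntegrable_const
              intervalIntegral.intervalIntegrable_id, integral_id, integral_const]
            norm_num
          rw [this]; ring
  have hinner : ⟪gradient F a + gradient F b, v⟫ = g 1 + g 0 := by
    simp [hgdef, hγ1, hγ0, inner_add_left]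
  have e1 : (∫ t in (0:ℝ)..(1/2), (g t - g 0)) =
      (∫ t in (0:ℝ)..(1/2), g t) - (1/2) * g 0 := by
    rw [intervalIntegral.integral_sub (hgcont.intervalIntegrable _ _) intervalIntegrable_const,
      integral_const]
    norm_num
  have e2 : (∫ t in (1/2:ℝ)..1, (g t - g 1)) =
      (∫ t in (1/2:ℝ)..1, g t) - (1/2) * g 1 := by
    rw [intervalIntegral.integral_sub (hgcont.intervalIntegrable _ _) intervalIntegrable_const,
      integral_const]
    norm_num
  have main : F a - F b - (1 / 2) * ⟪gradient F a + gradient F b, v⟫ =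
      (∫ t in (0:ℝ)..(1/2), (g t - g 0)) + (∫ t in (1/2:ℝ)..1, (g t - g 1)) := by
    rw [e1, e2, hinner, ← hFT, hsplit]; ring
  calc |F a - F b - (1 / 2) * ⟪gradient F a + gradient F b, a - b⟫|
      = |(∫ t in (0:ℝ)..(1/2), (g t - g 0)) + (∫ t in (1/2:ℝ)..1, (g t - g 1))| := by
        rw [← hvdef, main]
    _ ≤ c / 8 + c / 8 := (abs_add_le _ _).trans (add_le_add h1 h2)
    _ = (M / 4) * ‖a - b‖ ^ 2 := by rw [hcdef, ← hvdef]; ring
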